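/- Let I : (ℝ^d)^m → ℝ be translation invariant (I(y_1 + a, …, y_m + a) = I(y_1,…,y_m)) and satisfy |I(y_1,…,y_m)| ≤ C exp(-M Σ_{l=2}^m |y_l - y_1|) for some C, M > 0. Then as Λ ↗ ℝ^d in the sense of Van Hove, (1/|Λ|) ∫_{Λ^m} I(y_1,…,y_m) dy_1⋯dy_m → ∫_{(ℝ^d)^{m-1}} I(0, y_2, …, y_m) dy_2⋯dy_m. -/

import Mathlib

open MeasureTheory Filter

lemma aux_exp_bound {M : ℝ} (hM : 0 < M) (n : ℕ) :
    ∃ K : ℝ, 0 < K ∧ ∀ t : ℝ, 0 ≤ t → (1 + t) ^ n * Real.exp (-(M * t)) ≤ K := by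
  have h1 : Tendsto (fun t : ℝ => M * (1 + t)) atTop atTop :=
    (tendsto_atTop_add_const_left _ 1 tendsto_id).const_mul_atTop hM
  have h0 : Tendsto (fun t : ℝ => (1 + t) ^ n * Real.exp (-(M * t))) atTop (nhds 0) := by
    have h2 := (Real.tendsto_pow_mul_exp_neg_atTop_nhds_zero n).comp h1
    have h3 := h2.mul_const ((M ^ n)⁻¹ * Real.exp M)
    rw [zero_mul] at h3
    refine h3.congr (fun t => ?_)
    simp only [Function.comp]
    have e1 : Real.exp (-(M * (1 + t))) * Real.exp M = Real.exp (-(M * t)) := by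
      rw [← Real.exp_add]; congr 1; ring
    have hMn : (M : ℝ) ^ n ≠ 0 := pow_ne_zero _ hM.ne'
    rw [mul_pow]
    linear_combination (1 + t) ^ n * Real.exp (-(M * (1 + t))) * Real.exp M * mul_inv_cancel₀ hMn
      + (1 + t) ^ n * e1
  have h4 : ∀ᶠ t in atTop, (1 + t) ^ n * Real.exp (-(M * t)) ≤ 1 :=
    h0.eventually (eventually_le_nhds one_pos)
  obtain ⟨T, hT⟩ := eventually_atTop.mp h4
  obtain ⟨K₀, hK₀⟩ := (isCompact_Icc (a := (0 : ℝ)) (b := T)).exists_bound_of_continuousOn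
    (f := fun t : ℝ => (1 + t) ^ n * Real.exp (-(M * t)))
    (Continuous.continuousOn (by continuity))
  refine ⟨max K₀ 1, lt_of_lt_of_le one_pos (le_max_right _ _), fun t ht => ?_⟩
  by_cases htT : t ≤ T
  · exact le_trans (le_trans (le_abs_self _) (hK₀ t ⟨ht, htT⟩)) (le_max_left _ _)
  · exact le_trans (hT t (le_of_not_ge htT)) (le_max_right _ _)

lemma aux_integrable_exp {E : Type*} [NormedAddCommGroup E] [NormedSpace ℝ E]
    [FiniteDimensional ℝ E] [MeasurableSpace E] [BorelSpace E]
    (μ : Measure E) [μ.IsAddHaarMeasure] {M : ℝ} (hM : 0 < M) :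
    Integrable (fun x : E => Real.exp (-(M * ‖x‖))) μ := by
  obtain ⟨K, hKpos, hK⟩ := aux_exp_bound hM (Module.finrank ℝ E + 1)
  have hnr : (Module.finrank ℝ E : ℝ) < ((Module.finrank ℝ E + 1 : ℕ) : ℝ) := by
    push_cast; linarith
  refine ((integrable_one_add_norm (μ := μ) hnr).const_mul K).mono'
    (Continuous.aestronglyMeasurable (by continuity)) (Eventually.of_forall fun x => ?_)
  rw [Real.norm_eq_abs, abs_of_pos (Real.exp_pos _)]
  have h1 : (0:ℝ) < 1 + ‖x‖ := by positivity
  have h2 : ((1:ℝ) + ‖x‖) ^ (-((Module.finrank ℝ E + 1 : ℕ) : ℝ))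
      = ((1 + ‖x‖) ^ (Module.finrank ℝ E + 1))⁻¹ := by
    rw [← Real.rpow_natCast (1 + ‖x‖) (Module.finrank ℝ E + 1), ← Real.rpow_neg h1.le]
  rw [h2, ← div_eq_mul_inv, le_div_iff₀ (by positivity)]
  calc Real.exp (-(M * ‖x‖)) * (1 + ‖x‖) ^ (Module.finrank ℝ E + 1)
      = (1 + ‖x‖) ^ (Module.finrank ℝ E + 1) * Real.exp (-(M * ‖x‖)) := by ring
    _ ≤ K := hK ‖x‖ (norm_nonneg x)

lemma aux_frontier_cross {E : Type*} [NormedAddCommGroup E] [NormedSpace ℝ E]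
    {s : Set E} {x z : E} (hx : x ∈ s) (hz : z ∉ s) :
    ∃ w ∈ frontier s, dist x w ≤ dist x z := by
  have hseg : IsPreconnected (segment ℝ x z) := (convex_segment x z).isPreconnected
  have key : (segment ℝ x z ∩ frontier s).Nonempty := by
    by_contra hemp
    rw [Set.not_nonempty_iff_eq_empty] at hemp
    have hnf : ∀ y ∈ segment ℝ x z, y ∉ frontier s := fun y hy hf =>
      Set.eq_empty_iff_forall_notMem.mp hemp y ⟨hy, hf⟩
    have hmem : segment ℝ x z ⊆ interior s ∪ interior sᶜ := by
      intro y hy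
      have h1 := hnf y hy
      rw [frontier_eq_closure_inter_closure, Set.mem_inter_iff, not_and_or] at h1
      rcases h1 with h1 | h1
      · right; rwa [interior_compl, Set.mem_compl_iff]
      · left; rwa [closure_compl, Set.mem_compl_iff, not_not] at h1
    have hxi : x ∈ interior s := by
      rcases hmem (left_mem_segment ℝ x z) with h | h
      · exact h
      · exact absurd hx (interior_subset h)
    have hzi : z ∈ interior sᶜ := by
      rcases hmem (right_mem_segment ℝ x z) with h | h
      · exact absurd (interior_subset h) hz
      · exact h
    obtain ⟨y, hyseg, hyu, hyv⟩ := hseg (interior s) (interior sᶜ) isOpen_interior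
      isOpen_interior hmem ⟨x, left_mem_segment ℝ x z, hxi⟩ ⟨z, right_mem_segment ℝ x z, hzi⟩
    exact (interior_subset hyv) (interior_subset hyu)
  obtain ⟨w, hwseg, hwf⟩ := key
  refine ⟨w, hwf, ?_⟩
  have h := dist_add_dist_of_mem_segment hwseg
  have := dist_nonneg (x := w) (y := z)
  linarith

set_option maxHeartbeats 1000000 in
/-- Thermodynamic limit for integrals of translation invariant, exponentially
decaying integrands: if `Λₙ ↗ ℝ^d` in the sense of Van Hove, then
`|Λₙ|⁻¹ ∫_{Λₙ^m} I → ∫_{(ℝ^d)^{m-1}} I(0, y₂, …, yₘ)`. -/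
theorem van_hove_thermodynamic_limit (d m : ℕ) (hd : 0 < d)
    (I : (Fin (m + 1) → EuclideanSpace ℝ (Fin d)) → ℝ)
    (hImeas : Measurable I)
    (htrans : ∀ (y : Fin (m + 1) → EuclideanSpace ℝ (Fin d))
      (a : EuclideanSpace ℝ (Fin d)), I (fun l => y l + a) = I y)
    (C M : ℝ) (hC : 0 < C) (hM : 0 < M)
    (hbound : ∀ y : Fin (m + 1) → EuclideanSpace ℝ (Fin d),
      |I y| ≤ C * Real.exp (-M * ∑ l : Fin m, ‖y l.succ - y 0‖))
    (Λ : ℕ → Set (EuclideanSpace ℝ (Fin d)))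
    (hmeasΛ : ∀ n, MeasurableSet (Λ n))
    (hbdd : ∀ n, Bornology.IsBounded (Λ n))
    (hpos : ∀ n, 0 < volume (Λ n))
    (hVH : ∀ a : ℝ, 0 < a → Tendsto
      (fun n => (volume {y ∈ Λ n | Metric.infDist y (frontier (Λ n)) < a}).toReal /
        (volume (Λ n)).toReal) atTop (nhds 0))
    (hball : ∀ R : ℝ, 0 < R →
      ∀ᶠ n in atTop, Metric.ball (0 : EuclideanSpace ℝ (Fin d)) R ⊆ Λ n) :
    Tendsto
      (fun n => (∫ y in Set.univ.pi (fun _ : Fin (m + 1) => Λ n), I y) /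
        (volume (Λ n)).toReal)
      atTop
      (nhds (∫ v : Fin m → EuclideanSpace ℝ (Fin d), I (Fin.cons 0 v))) := by
  -- the limit integrand
  set g : (Fin m → EuclideanSpace ℝ (Fin d)) → ℝ := fun v => I (Fin.cons 0 v) with hgdef
  have hmeas_cons : Measurable
      (fun v : Fin m → EuclideanSpace ℝ (Fin d) =>
        (Fin.cons 0 v : Fin (m + 1) → EuclideanSpace ℝ (Fin d))) := by
    apply measurable_pi_lambda
    intro j
    refine Fin.cases ?_ ?_ j
    · simpa using measurable_const
    · intro i; simpa using measurable_pi_apply i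
  have hgmeas : Measurable g := hImeas.comp hmeas_cons
  have hgbound : ∀ v : Fin m → EuclideanSpace ℝ (Fin d),
      |g v| ≤ C * Real.exp (-M * ∑ l : Fin m, ‖v l‖) := by
    intro v
    have h := hbound (Fin.cons 0 v)
    simp only [Fin.cons_succ, Fin.cons_zero, sub_zero] at h
    exact h
  -- the dominating function
  set G : (Fin m → EuclideanSpace ℝ (Fin d)) → ℝ :=
    fun v => C * Real.exp (-M * ∑ l : Fin m, ‖v l‖) with hGdef
  have hGnonneg : ∀ v, 0 ≤ G v := fun v => by positivity
  have hGint : Integrable G := by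
    have h2 : G = fun v => C * ∏ l : Fin m, Real.exp (-(M * ‖v l‖)) := by
      funext v
      show C * Real.exp (-M * ∑ l : Fin m, ‖v l‖)
        = C * ∏ l : Fin m, Real.exp (-(M * ‖v l‖))
      rw [← Real.exp_sum]
      congr 1
      rw [Finset.mul_sum]
      exact congrArg Real.exp (Finset.sum_congr rfl fun l _ => (neg_mul M ‖v l‖))
    rw [h2]
    exact (Integrable.fintype_prod
      (f := fun _ : Fin m => fun x : EuclideanSpace ℝ (Fin d) => Real.exp (-(M * ‖x‖)))
      (fun _ => aux_integrable_exp volume hM)).const_mul C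
  have hgint : Integrable g := hGint.mono' hgmeas.aestronglyMeasurable
    (Eventually.of_forall fun v => by rw [Real.norm_eq_abs]; exact hgbound v)
  -- the measure preserving change of variables
  set T : EuclideanSpace ℝ (Fin d) × (Fin m → EuclideanSpace ℝ (Fin d))
      → (Fin (m + 1) → EuclideanSpace ℝ (Fin d)) :=
    fun p => (MeasurableEquiv.piFinSuccAbove (fun _ : Fin (m + 1) => EuclideanSpace ℝ (Fin d)) 0).symm
      (p.1, fun l => p.2 l + p.1) with hTdef
  have hmeas_shear : Measurable (fun p : EuclideanSpace ℝ (Fin d) × (Fin m → EuclideanSpace ℝ (Fin d)) =>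
      (p.1, fun l => p.2 l + p.1) :
      EuclideanSpace ℝ (Fin d) × (Fin m → EuclideanSpace ℝ (Fin d))
        → EuclideanSpace ℝ (Fin d) × (Fin m → EuclideanSpace ℝ (Fin d))) :=
    measurable_fst.prodMk (measurable_pi_lambda _ fun l =>
      ((measurable_pi_apply l).comp measurable_snd).add measurable_fst)
  have mp_sh : MeasurePreserving
      (fun p : EuclideanSpace ℝ (Fin d) × (Fin m → EuclideanSpace ℝ (Fin d)) =>
        (p.1, fun l => p.2 l + p.1))
      ((volume : Measure (EuclideanSpace ℝ (Fin d))).prod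
        (volume : Measure (Fin m → EuclideanSpace ℝ (Fin d))))
      ((volume : Measure (EuclideanSpace ℝ (Fin d))).prod
        (volume : Measure (Fin m → EuclideanSpace ℝ (Fin d)))) := by
    have hmap : ∀ a : EuclideanSpace ℝ (Fin d),
        Measure.map (fun v : Fin m → EuclideanSpace ℝ (Fin d) => fun l => v l + a)
          (volume : Measure (Fin m → EuclideanSpace ℝ (Fin d))) = volume := by
      intro a
      have h : (fun v : Fin m → EuclideanSpace ℝ (Fin d) => fun l => v l + a)
          = fun v => v + (fun _ => a) := rfl
      rw [h]
      exact (measurePreserving_add_right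
        (volume : Measure (Fin m → EuclideanSpace ℝ (Fin d))) _).map_eq
    exact MeasurePreserving.skew_product
      (f := @id (EuclideanSpace ℝ (Fin d)))
      (g := fun (a : EuclideanSpace ℝ (Fin d)) (v : Fin m → EuclideanSpace ℝ (Fin d)) =>
        fun l => v l + a)
      (MeasurePreserving.id _)
      (measurable_pi_lambda _ fun l =>
        ((measurable_pi_apply l).comp measurable_snd).add measurable_fst)
      (ae_of_all _ hmap)
  have mpT : MeasurePreserving T
      ((volume : Measure (EuclideanSpace ℝ (Fin d))).prod
        (volume : Measure (Fin m → EuclideanSpace ℝ (Fin d))))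
      (volume : Measure (Fin (m + 1) → EuclideanSpace ℝ (Fin d))) := by
    have h2 := (volume_preserving_piFinSuccAbove
      (fun _ : Fin (m + 1) => EuclideanSpace ℝ (Fin d)) 0).symm
    have h3 := h2.comp mp_sh
    exact h3
  have embT : MeasurableEmbedding T := by
    refine ((MeasurableEquiv.piFinSuccAbove
      (fun _ : Fin (m + 1) => EuclideanSpace ℝ (Fin d)) 0).symm.measurableEmbedding).comp
      (MeasurableEquiv.measurableEmbedding
        ⟨⟨fun p : EuclideanSpace ℝ (Fin d) × (Fin m → EuclideanSpace ℝ (Fin d)) =>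
            (p.1, fun l => p.2 l + p.1),
          fun p : EuclideanSpace ℝ (Fin d) × (Fin m → EuclideanSpace ℝ (Fin d)) =>
            (p.1, fun l => p.2 l - p.1), fun p => ?_, fun p => ?_⟩,
          hmeas_shear,
          measurable_fst.prodMk (measurable_pi_lambda _ fun l =>
            ((measurable_pi_apply l).comp measurable_snd).sub measurable_fst)⟩)
    · refine Prod.ext rfl ?_
      funext l
      simp
    · refine Prod.ext rfl ?_
      funext l
      simp
  have hTapp : ∀ (a : EuclideanSpace ℝ (Fin d)) (v : Fin m → EuclideanSpace ℝ (Fin d)),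
      T (a, v) = fun l => Fin.cons (α := fun _ : Fin (m + 1) => EuclideanSpace ℝ (Fin d)) 0 v l + a := by
    intro a v
    funext l
    simp only [hTdef]
    induction l using Fin.cases with
    | zero => simp [MeasurableEquiv.piFinSuccAbove_symm_apply, Fin.insertNth_zero']
    | succ i => simp [MeasurableEquiv.piFinSuccAbove_symm_apply, Fin.insertNth_zero']
  -- the sets of good translates
  set W : ℕ → Set (EuclideanSpace ℝ (Fin d) × (Fin m → EuclideanSpace ℝ (Fin d))) := fun n =>
    (Prod.fst ⁻¹' Λ n) ∩ ⋂ l : Fin m,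
      (fun p : EuclideanSpace ℝ (Fin d) × (Fin m → EuclideanSpace ℝ (Fin d)) =>
        p.2 l + p.1) ⁻¹' Λ n with hWdef
  have hev : ∀ l : Fin m, Measurable
      (fun p : EuclideanSpace ℝ (Fin d) × (Fin m → EuclideanSpace ℝ (Fin d)) =>
        p.2 l + p.1) := fun l => (measurable_snd.eval).add measurable_fst
  have hWmeas : ∀ n, MeasurableSet (W n) := fun n =>
    (measurable_fst (hmeasΛ n)).inter <| MeasurableSet.iInter fun l =>
      (hev l) (hmeasΛ n)
  have hWmem : ∀ n (p : EuclideanSpace ℝ (Fin d) × (Fin m → EuclideanSpace ℝ (Fin d))),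
      p ∈ W n ↔ p.1 ∈ Λ n ∧ ∀ l, p.2 l + p.1 ∈ Λ n := by
    intro n p
    simp [hWdef]
  set S : ℕ → (Fin m → EuclideanSpace ℝ (Fin d)) → Set (EuclideanSpace ℝ (Fin d)) :=
    fun n v => (fun a => (a, v)) ⁻¹' W n with hSdef
  have hSmeas : ∀ n v, MeasurableSet (S n v) := fun n v =>
    (hWmeas n).preimage measurable_prodMk_right
  have hSmemΛ : ∀ n v a, a ∈ S n v ↔ a ∈ Λ n ∧ ∀ l, v l + a ∈ Λ n := fun n v a => hWmem n (a, v)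
  have hSsub : ∀ n v, S n v ⊆ Λ n := fun n v a ha => ((hSmemΛ n v a).1 ha).1
  have volfin : ∀ n, volume (Λ n) ≠ ⊤ := by
    intro n
    have h1 : volume (Λ n) ≤ volume (closure (Λ n)) := measure_mono subset_closure
    have h2 : IsCompact (closure (Λ n)) := (hbdd n).isCompact_closure
    exact (lt_of_le_of_lt h1 h2.measure_lt_top).ne
  have cpos : ∀ n, 0 < (volume (Λ n)).toReal := fun n =>
    ENNReal.toReal_pos (hpos n).ne' (volfin n)
  have volSfin : ∀ n v, volume (S n v) ≠ ⊤ := fun n v =>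
    (lt_of_le_of_lt (measure_mono (hSsub n v)) (lt_top_iff_ne_top.2 (volfin n))).ne
  -- key identity for each n
  have key : ∀ n, (∫ y in Set.univ.pi (fun _ : Fin (m + 1) => Λ n), I y)
      = ∫ v : Fin m → EuclideanSpace ℝ (Fin d), g v * (volume (S n v)).toReal := by
    intro n
    have hpiMeas : MeasurableSet (Set.univ.pi fun _ : Fin (m + 1) => Λ n) :=
      MeasurableSet.univ_pi fun _ => hmeasΛ n
    have hJT : ∀ p : EuclideanSpace ℝ (Fin d) × (Fin m → EuclideanSpace ℝ (Fin d)),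
        (Set.univ.pi fun _ : Fin (m + 1) => Λ n).indicator I (T p)
          = Set.indicator (S n p.2) (fun _ => g p.2) p.1 := by
      rintro ⟨a, v⟩
      have hmem_iff : T (a, v) ∈ (Set.univ.pi fun _ : Fin (m + 1) => Λ n) ↔ a ∈ S n v := by
        rw [Set.mem_univ_pi, hSmemΛ]
        constructor
        · intro h
          refine ⟨?_, fun l => ?_⟩
          · have h0 := h 0
            rw [hTapp] at h0
            simpa using h0
          · have hl := h l.succ
            rw [hTapp] at hl
            simpa using hl
        · intro h l
          rw [hTapp]
          induction l using Fin.cases with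
          | zero => simpa using h.1
          | succ i => simpa using h.2 i
      by_cases h : a ∈ S n v
      · rw [Set.indicator_of_mem (hmem_iff.2 h), Set.indicator_of_mem h]
        rw [hTapp]
        exact htrans (Fin.cons 0 v) a
      · rw [Set.indicator_of_notMem (fun hc => h (hmem_iff.1 hc)),
          Set.indicator_of_notMem h]
    have hJTint : Integrable
        (fun p => (Set.univ.pi fun _ : Fin (m + 1) => Λ n).indicator I (T p))
        ((volume : Measure (EuclideanSpace ℝ (Fin d))).prod
          (volume : Measure (Fin m → EuclideanSpace ℝ (Fin d)))) := by
      have hbound_int : Integrable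
          (fun p : EuclideanSpace ℝ (Fin d) × (Fin m → EuclideanSpace ℝ (Fin d)) =>
            (Λ n).indicator (fun _ => (1 : ℝ)) p.1 * G p.2)
          ((volume : Measure (EuclideanSpace ℝ (Fin d))).prod
            (volume : Measure (Fin m → EuclideanSpace ℝ (Fin d)))) := by
        refine Integrable.mul_prod ?_ hGint
        rw [integrable_indicator_iff (hmeasΛ n)]
        exact integrableOn_const (volfin n)
      refine hbound_int.mono' ?_ (Eventually.of_forall fun p => ?_)
      · exact ((hImeas.indicator hpiMeas).comp mpT.measurable).aestronglyMeasurable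
      · rw [hJT p, Real.norm_eq_abs]
        by_cases h : p.1 ∈ S n p.2
        · rw [Set.indicator_of_mem h, Set.indicator_of_mem (hSsub n p.2 h), one_mul]
          exact hgbound p.2
        · rw [Set.indicator_of_notMem h, abs_zero]
          exact mul_nonneg (Set.indicator_nonneg (fun _ _ => zero_le_one) _) (hGnonneg _)
    calc (∫ y in Set.univ.pi (fun _ : Fin (m + 1) => Λ n), I y)
        = ∫ y, (Set.univ.pi fun _ : Fin (m + 1) => Λ n).indicator I y :=
          (integral_indicator hpiMeas).symm
      _ = ∫ p, (Set.univ.pi fun _ : Fin (m + 1) => Λ n).indicator I (T p)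
            ∂((volume : Measure (EuclideanSpace ℝ (Fin d))).prod
              (volume : Measure (Fin m → EuclideanSpace ℝ (Fin d)))) :=
          (mpT.integral_comp embT _).symm
      _ = ∫ v, (∫ a, (Set.univ.pi fun _ : Fin (m + 1) => Λ n).indicator I (T (a, v))) :=
          integral_prod_symm _ hJTint
      _ = ∫ v : Fin m → EuclideanSpace ℝ (Fin d), g v * (volume (S n v)).toReal := by
          refine integral_congr_ae (ae_of_all _ fun v => ?_)
          calc (∫ a, (Set.univ.pi fun _ : Fin (m + 1) => Λ n).indicator I (T (a, v)))
              = ∫ a, Set.indicator (S n v) (fun _ => g v) a :=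
                integral_congr_ae (ae_of_all _ fun a => hJT (a, v))
            _ = ∫ a in S n v, g v := integral_indicator (hSmeas n v)
            _ = (volume (S n v)).toReal • g v := setIntegral_const _
            _ = g v * (volume (S n v)).toReal := by rw [smul_eq_mul, mul_comm]
  -- dominated convergence
  have main : Tendsto
      (fun n => ∫ v : Fin m → EuclideanSpace ℝ (Fin d),
        g v * ((volume (S n v)).toReal / (volume (Λ n)).toReal))
      atTop (nhds (∫ v : Fin m → EuclideanSpace ℝ (Fin d), g v)) := by
    refine tendsto_integral_of_dominated_convergence G ?_ hGint ?_ ?_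
    · intro n
      have hmeasS : Measurable fun v => volume (S n v) := by
        simp only [hSdef]
        exact measurable_measure_prodMk_right (hWmeas n)
      exact (hgmeas.mul ((hmeasS.ennreal_toReal).div_const _)).aestronglyMeasurable
    · intro n
      refine Eventually.of_forall fun v => ?_
      rw [Real.norm_eq_abs, abs_mul]
      have h1 : |(volume (S n v)).toReal / (volume (Λ n)).toReal| ≤ 1 := by
        rw [abs_of_nonneg (div_nonneg ENNReal.toReal_nonneg ENNReal.toReal_nonneg),
          div_le_one (cpos n)]
        exact ENNReal.toReal_mono (volfin n) (measure_mono (hSsub n v))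
      calc |g v| * |(volume (S n v)).toReal / (volume (Λ n)).toReal|
          ≤ |g v| * 1 := mul_le_mul_of_nonneg_left h1 (abs_nonneg _)
        _ = |g v| := mul_one _
        _ ≤ G v := hgbound v
    · refine Eventually.of_forall fun v => ?_
      have ha : (0 : ℝ) < (∑ l : Fin m, ‖v l‖) + 1 := by positivity
      have hBd := hVH _ ha
      have hsub : ∀ n, Λ n \ S n v ⊆
          {y ∈ Λ n | Metric.infDist y (frontier (Λ n)) < (∑ l : Fin m, ‖v l‖) + 1} := by
        intro n y hy
        obtain ⟨hyΛ, hyS⟩ := hy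
        have hns : ¬(y ∈ Λ n ∧ ∀ l, v l + y ∈ Λ n) := fun hc => hyS ((hSmemΛ n v y).2 hc)
        push_neg at hns
        obtain ⟨l, hl⟩ := hns hyΛ
        obtain ⟨w, hwf, hwd⟩ := aux_frontier_cross hyΛ hl
        refine ⟨hyΛ, lt_of_le_of_lt (Metric.infDist_le_dist_of_mem hwf) ?_⟩
        have hd2 : dist y (v l + y) = ‖v l‖ := by
          rw [dist_eq_norm]
          simp
        have h3 : ‖v l‖ ≤ ∑ j : Fin m, ‖v j‖ :=
          Finset.single_le_sum (fun j _ => norm_nonneg (v j)) (Finset.mem_univ l)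
        calc dist y w ≤ dist y (v l + y) := hwd
          _ = ‖v l‖ := hd2
          _ < (∑ l : Fin m, ‖v l‖) + 1 := by linarith
      have hupper : ∀ n, (volume (S n v)).toReal / (volume (Λ n)).toReal ≤ 1 := fun n => by
        rw [div_le_one (cpos n)]
        exact ENNReal.toReal_mono (volfin n) (measure_mono (hSsub n v))
      have hineq : ∀ n,
          1 - (volume {y ∈ Λ n | Metric.infDist y (frontier (Λ n)) <
              (∑ l : Fin m, ‖v l‖) + 1}).toReal / (volume (Λ n)).toReal
            ≤ (volume (S n v)).toReal / (volume (Λ n)).toReal := by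
        intro n
        have hcover : Λ n ⊆ S n v ∪
            {y ∈ Λ n | Metric.infDist y (frontier (Λ n)) < (∑ l : Fin m, ‖v l‖) + 1} := by
          intro y hy
          by_cases h : y ∈ S n v
          · exact Or.inl h
          · exact Or.inr (hsub n ⟨hy, h⟩)
        have hvol : volume (Λ n) ≤ volume (S n v) +
            volume {y ∈ Λ n | Metric.infDist y (frontier (Λ n)) < (∑ l : Fin m, ‖v l‖) + 1} :=
          le_trans (measure_mono hcover) (measure_union_le _ _)
        have hB_ne : volume {y ∈ Λ n | Metric.infDist y (frontier (Λ n)) <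
            (∑ l : Fin m, ‖v l‖) + 1} ≠ ⊤ :=
          (lt_of_le_of_lt (measure_mono (fun y hy => hy.1)) (lt_top_iff_ne_top.2 (volfin n))).ne
        have h5 := ENNReal.toReal_mono (ENNReal.add_ne_top.2 ⟨volSfin n v, hB_ne⟩) hvol
        rw [ENNReal.toReal_add (volSfin n v) hB_ne] at h5
        have hc := cpos n
        have h6 : 1 - (volume {y ∈ Λ n | Metric.infDist y (frontier (Λ n)) <
              (∑ l : Fin m, ‖v l‖) + 1}).toReal / (volume (Λ n)).toReal
            = ((volume (Λ n)).toReal - (volume {y ∈ Λ n | Metric.infDist y (frontier (Λ n)) <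
              (∑ l : Fin m, ‖v l‖) + 1}).toReal) / (volume (Λ n)).toReal := by
          field_simp
        rw [h6]
        apply div_le_div_of_nonneg_right ?_ hc.le
        linarith
      have hlow : Tendsto (fun n =>
          1 - (volume {y ∈ Λ n | Metric.infDist y (frontier (Λ n)) <
            (∑ l : Fin m, ‖v l‖) + 1}).toReal / (volume (Λ n)).toReal) atTop (nhds 1) := by
        have h := (tendsto_const_nhds (x := (1 : ℝ)) (f := atTop)).sub hBd
        simpa using h
      have hr : Tendsto (fun n => (volume (S n v)).toReal / (volume (Λ n)).toReal)
          atTop (nhds 1) :=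
        tendsto_of_tendsto_of_tendsto_of_le_of_le hlow tendsto_const_nhds hineq hupper
      have h := hr.const_mul (g v)
      simpa using h
  have eqn : ∀ n, (∫ y in Set.univ.pi (fun _ : Fin (m + 1) => Λ n), I y) /
        (volume (Λ n)).toReal
      = ∫ v : Fin m → EuclideanSpace ℝ (Fin d),
          g v * ((volume (S n v)).toReal / (volume (Λ n)).toReal) := by
    intro n
    rw [key n, ← integral_div]
    exact integral_congr_ae (ae_of_all _ fun v => (mul_div_assoc _ _ _))
  exact Tendsto.congr (fun n => (eqn n).symm) main
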